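/- Fix b ≥ 1. Let G be an extended type-II gadget with designated vertices p, q, vertex r and paths P_1, P_2 as in the definition. Then: (1) for every vertex x ∈ V(G)∖{p,q}, there exists a ∈ {1,2} and an (a,b)-alternating-path R contained in G with t_a(R) = x, s_1(R) ∈ {p,q} and |V(R) ∩ {p,q}| = 1; (2) for every non-empty set X ⊆ V(P_1)∖{p,r}, there exists a ∈ {1,2} and an (a,b)-alternating-path R contained in G with t_a(R) ∈ X, s_1(R) ∈ {p,q}, |V(R) ∩ {p,q}| = 1 and |V(R) ∩ X| = 1. -/

import Mathlib

/- Common definitions: digraphs as irreflexive-in-intent relations `V → V → Prop`,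
   directed paths as nonempty duplicate-free lists of vertices,
   subdivisions, gadgets, alternating paths and chains, following
   "Subdivisions in digraphs of large out-degree or large dichromatic number". -/

namespace Paper

variable {V : Type*}

/-- `p` is a directed path in the digraph `D`: a nonempty list of pairwise distinct
vertices in which consecutive vertices are joined by an arc of `D`.
Its length (number of arcs) is `p.length - 1`. -/
def IsDipathList (D : V → V → Prop) (p : List V) : Prop :=
  p ≠ [] ∧ p.Nodup ∧ p.Chain' D

/-- The out-degree of a vertex. -/
noncomputable def outDeg (D : V → V → Prop) (v : V) : ℕ :=
  Set.ncard {w | D v w}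

/-- The digraph `D` contains a subdivision of the digraph `F`: there is an injective
embedding `φ` of the branch vertices and, for every arc `(x,y)` of `F`, a directed path
in `D` from `φ x` to `φ y` of length at least one, such that the internal vertices of
these paths avoid the branch vertices and the paths of distinct arcs are internally
vertex-disjoint. -/
def ContainsSubdivisionOf {W : Type*} (D : V → V → Prop) (F : W → W → Prop) : Prop :=
  ∃ (φ : W → V) (P : W → W → List V),
    Function.Injective φ ∧
    (∀ ⦃x y⦄, F x y → IsDipathList D (P x y) ∧ (P x y).head? = some (φ x) ∧
      (P x y).getLast? = some (φ y) ∧ 2 ≤ (P x y).length ∧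
      ∀ z ∈ (P x y).tail.dropLast, ∀ w, φ w ≠ z) ∧
    (∀ ⦃x y x' y'⦄, F x y → F x' y' → (x, y) ≠ (x', y') →
      ∀ z ∈ (P x y).tail.dropLast, z ∉ P x' y')

/-- As `ContainsSubdivisionOf`, but moreover the subdivision spans exactly
the vertex set `S`. -/
def SpansSubdivisionOf {W : Type*} (D : V → V → Prop) (S : Set V) (F : W → W → Prop) : Prop :=
  ∃ (φ : W → V) (P : W → W → List V),
    Function.Injective φ ∧
    (∀ ⦃x y⦄, F x y → IsDipathList D (P x y) ∧ (P x y).head? = some (φ x) ∧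
      (P x y).getLast? = some (φ y) ∧ 2 ≤ (P x y).length ∧
      ∀ z ∈ (P x y).tail.dropLast, ∀ w, φ w ≠ z) ∧
    (∀ ⦃x y x' y'⦄, F x y → F x' y' → (x, y) ≠ (x', y') →
      ∀ z ∈ (P x y).tail.dropLast, z ∉ P x' y') ∧
    S = Set.range φ ∪ {z | ∃ x y, F x y ∧ z ∈ P x y}

/-- The biorientation of the triangle minus one arc: vertices `0,1,2` and arcs
`(0,1),(1,0),(1,2),(2,1),(0,2)`. -/
def K3e : Fin 3 → Fin 3 → Prop := fun x y =>
  (x, y) = (0, 1) ∨ (x, y) = (1, 0) ∨ (x, y) = (1, 2) ∨ (x, y) = (2, 1) ∨ (x, y) = (0, 2)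

/-- The biorientation of the complete graph on four vertices. -/
def K4bi : Fin 4 → Fin 4 → Prop := fun x y => x ≠ y

/-- The biorientation of the star with four edges (center `0`). -/
def S4bi : Fin 5 → Fin 5 → Prop := fun x y => x ≠ y ∧ (x = 0 ∨ y = 0)

/-- The orientation of the cycle of length `ℓ` (vertex set `ZMod ℓ`) determined by
`σ`: the edge `{x, x+1}` is oriented from `x` to `x+1` if `σ x = true`, and from
`x+1` to `x` otherwise. -/
def CycleOrientation (ℓ : ℕ) (σ : ZMod ℓ → Bool) : ZMod ℓ → ZMod ℓ → Prop :=
  fun x y => (σ x = true ∧ y = x + 1) ∨ (σ y = false ∧ x = y + 1)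

/-- The oriented cycle `C_{a,b}` on `2ab` vertices: going around the cycle
`ZMod (2ab)`, the arcs of the `j`-th block of `b` consecutive edges are oriented
forwards for even `j` and backwards for odd `j`; its sources are `s_j = 2bj`
and its sinks are `t_j = 2bj + b`, joined by `2a` internally disjoint directed
paths of length `b` each. -/
def Cab (a b : ℕ) : ZMod (2 * a * b) → ZMod (2 * a * b) → Prop := fun x y =>
  ∃ i : ℕ, i < 2 * a * b ∧
    (((i / b) % 2 = 0 ∧ x = (i : ZMod (2 * a * b)) ∧ y = ((i + 1 : ℕ) : ZMod (2 * a * b))) ∨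
     ((i / b) % 2 = 1 ∧ x = ((i + 1 : ℕ) : ZMod (2 * a * b)) ∧ y = (i : ZMod (2 * a * b))))

/-- The directed girth of `D` is at least `g`: every directed cycle
(a nonempty duplicate-free list `v :: p` with consecutive arcs and an arc from the
last vertex back to `v`) has length at least `g`. -/
def DirGirthGE (D : V → V → Prop) (g : ℕ) : Prop :=
  ∀ (v : V) (p : List V), (v :: p).Nodup → List.Chain D v (p ++ [v]) → g ≤ p.length + 1

/-- `D` is strongly connected. -/
def StronglyConnected (D : V → V → Prop) : Prop :=
  ∀ u v : V, Relation.ReflTransGen D u v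

/-- `D` is strongly `k`-arc-connected: after deleting any set of at most `k-1` arcs,
the digraph remains strongly connected. -/
def StronglyArcConnected (D : V → V → Prop) (k : ℕ) : Prop :=
  ∀ E : Finset (V × V), E.card < k →
    StronglyConnected (fun u v => D u v ∧ (u, v) ∉ E)

/-- `x` and `y` are consecutive (in this order) in the list `l`. -/
def adjIn (l : List V) (x y : V) : Prop := ∃ l₁ l₂, l = l₁ ++ x :: y :: l₂

/-- A type-I gadget in `D`: a directed cycle `p, q, rest…` of length at least `g`
through the arc `(p,q)`. -/
structure TypeIGadget (D : V → V → Prop) (g : ℕ) where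
  p : V
  q : V
  rest : List V
  nodup : (p :: q :: rest).Nodup
  chain : List.Chain D p (q :: (rest ++ [p]))
  glen : g ≤ rest.length + 2

def TypeIGadget.verts {D : V → V → Prop} {g : ℕ} (G : TypeIGadget D g) : Set V :=
  {x | x ∈ G.p :: G.q :: G.rest}

def TypeIGadget.arcs {D : V → V → Prop} {g : ℕ} (G : TypeIGadget D g) : V → V → Prop :=
  adjIn (G.p :: G.q :: (G.rest ++ [G.p]))

/-- A basic type-II gadget in `D` (with girth parameter `b`): vertices `p, q, r` and a
directed path `P₁` from `r` to `p` of length at least `2b² + b - 2` avoiding `q`,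
all of whose vertices send an arc to `q`. -/
structure BasicIIGadget (D : V → V → Prop) (b : ℕ) where
  p : V
  q : V
  r : V
  P₁ : List V
  path₁ : IsDipathList D P₁
  first₁ : P₁.head? = some r
  last₁ : P₁.getLast? = some p
  len₁ : 2 * b ^ 2 + b - 1 ≤ P₁.length
  hq : q ∉ P₁
  toq : ∀ x ∈ P₁, D x q

def BasicIIGadget.verts {D : V → V → Prop} {b : ℕ} (G : BasicIIGadget D b) : Set V :=
  insert G.q {x | x ∈ G.P₁}

def BasicIIGadget.arcs {D : V → V → Prop} {b : ℕ} (G : BasicIIGadget D b) :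
    V → V → Prop :=
  fun x y => adjIn G.P₁ x y ∨ (x ∈ G.P₁ ∧ y = G.q)

/-- An extended type-II gadget: a basic type-II gadget together with a directed path
`P₂` of length at least `b` ending at `r`, meeting `P₁` only in `r` and avoiding `q`,
such that either the first vertex of `P₂` sends an arc to the second vertex of `P₁`,
or some vertex of `P₁` other than `r` sends an arc to the first vertex of `P₂`. -/
structure ExtIIGadget (D : V → V → Prop) (b : ℕ) where
  p : V
  q : V
  r : V
  P₁ : List V
  path₁ : IsDipathList D P₁
  first₁ : P₁.head? = some r
  last₁ : P₁.getLast? = some p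
  len₁ : 2 * b ^ 2 + b - 1 ≤ P₁.length
  hq : q ∉ P₁
  toq : ∀ x ∈ P₁, D x q
  P₂ : List V
  path₂ : IsDipathList D P₂
  last₂ : P₂.getLast? = some r
  len₂ : b + 1 ≤ P₂.length
  inter : ∀ x ∈ P₁, x ∈ P₂ → x = r
  hq₂ : q ∉ P₂
  extra : (∃ z y, P₂.head? = some z ∧ P₁[1]? = some y ∧ D z y) ∨
          (∃ w z, w ∈ P₁ ∧ w ≠ r ∧ P₂.head? = some z ∧ D w z)

def ExtIIGadget.verts {D : V → V → Prop} {b : ℕ} (G : ExtIIGadget D b) : Set V :=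
  insert G.q ({x | x ∈ G.P₁} ∪ {x | x ∈ G.P₂})

def ExtIIGadget.arcs {D : V → V → Prop} {b : ℕ} (G : ExtIIGadget D b) : V → V → Prop :=
  fun x y => adjIn G.P₁ x y ∨ (x ∈ G.P₁ ∧ y = G.q) ∨ adjIn G.P₂ x y ∨
    (D x y ∧ ((G.P₂.head? = some x ∧ G.P₁[1]? = some y) ∨
              (x ∈ G.P₁ ∧ x ≠ G.r ∧ G.P₂.head? = some y)))

/-- A type-III gadget: vertices `p, q, r`, the arc `(p,q)`, and two internally
vertex-disjoint directed paths `P₁ : p → r` and `P₂ : q → r`, each of length at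
least `2b - 1`. -/
structure TypeIIIGadget (D : V → V → Prop) (b : ℕ) where
  p : V
  q : V
  r : V
  arc : D p q
  P₁ : List V
  P₂ : List V
  path₁ : IsDipathList D P₁
  path₂ : IsDipathList D P₂
  first₁ : P₁.head? = some p
  first₂ : P₂.head? = some q
  last₁ : P₁.getLast? = some r
  last₂ : P₂.getLast? = some r
  len₁ : 2 * b ≤ P₁.length
  len₂ : 2 * b ≤ P₂.length
  inter : ∀ x ∈ P₁, x ∈ P₂ → x = r

def TypeIIIGadget.verts {D : V → V → Prop} {b : ℕ} (G : TypeIIIGadget D b) : Set V :=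
  {x | x ∈ G.P₁} ∪ {x | x ∈ G.P₂}

def TypeIIIGadget.arcs {D : V → V → Prop} {b : ℕ} (G : TypeIIIGadget D b) :
    V → V → Prop :=
  fun x y => (x = G.p ∧ y = G.q) ∨ adjIn G.P₁ x y ∨ adjIn G.P₂ x y

/-- A trivial gadget: just the arc `(p,q)`. -/
structure TrivGadget (D : V → V → Prop) where
  p : V
  q : V
  arc : D p q

def TrivGadget.verts {D : V → V → Prop} (G : TrivGadget D) : Set V := {G.p, G.q}

def TrivGadget.arcs {D : V → V → Prop} (G : TrivGadget D) : V → V → Prop :=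
  fun x y => x = G.p ∧ y = G.q

/-- An `(a,b)`-alternating path in `D` (with 0-based indexing): vertices
`s 0, …, s (a-1)`, `t 0, …, t (a-1)` and pairwise internally disjoint directed paths
`Q i : s i → t i` and `Q' i : s (i+1) → t i`, forming an oriented path; every `Q' i`
and every `Q i` with `0 < i < a - 1` has length at least `b` (`Q 0` and `Q (a-1)`
may even be single vertices). -/
structure AltPath (D : V → V → Prop) (a b : ℕ) where
  s : Fin a → V
  t : Fin a → V
  Q : Fin a → List V
  Q' : Fin (a - 1) → List V
  path_Q : ∀ i, IsDipathList D (Q i)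
  first_Q : ∀ i, (Q i).head? = some (s i)
  last_Q : ∀ i, (Q i).getLast? = some (t i)
  path_Q' : ∀ i, IsDipathList D (Q' i)
  first_Q' : ∀ i : Fin (a - 1),
    (Q' i).head? = some (s ⟨i.val + 1, by have := i.isLt; omega⟩)
  last_Q' : ∀ i : Fin (a - 1),
    (Q' i).getLast? = some (t ⟨i.val, by have := i.isLt; omega⟩)
  len_Q : ∀ i : Fin a, 0 < i.val → i.val < a - 1 → b + 1 ≤ (Q i).length
  len_Q' : ∀ i, b + 1 ≤ (Q' i).length
  disj_QQ : ∀ i j : Fin a, i ≠ j → ∀ x ∈ Q i, x ∉ Q j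
  disj_Q'Q' : ∀ i j : Fin (a - 1), i ≠ j → ∀ x ∈ Q' i, x ∉ Q' j
  disj_QQ' : ∀ (i : Fin a) (j : Fin (a - 1)), ∀ x ∈ Q i, x ∈ Q' j →
    (j.val = i.val ∧ x = t i) ∨ (i.val = j.val + 1 ∧ x = s i)

def AltPath.verts {D : V → V → Prop} {a b : ℕ} (R : AltPath D a b) : Set V :=
  {x | (∃ i, x ∈ R.Q i) ∨ (∃ i, x ∈ R.Q' i)}

/-- A strong alternating path: additionally `Q 0` and `Q (a-1)` (hence all `Q i`)
have length at least `b`. -/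
def AltPath.Strong {D : V → V → Prop} {a b : ℕ} (R : AltPath D a b) : Prop :=
  ∀ i, b + 1 ≤ (R.Q i).length

def AltPath.arcs {D : V → V → Prop} {a b : ℕ} (R : AltPath D a b) : V → V → Prop :=
  fun x y => (∃ i, adjIn (R.Q i) x y) ∨ (∃ i, adjIn (R.Q' i) x y)

/-- A gadget allowed in a chain: type I (with `g = 4b²`), basic type II, or type III. -/
inductive ChainGadget (D : V → V → Prop) (b : ℕ) where
  | I : TypeIGadget D (4 * b ^ 2) → ChainGadget D b
  | II : BasicIIGadget D b → ChainGadget D b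
  | III : TypeIIIGadget D b → ChainGadget D b

def ChainGadget.pp {D : V → V → Prop} {b : ℕ} : ChainGadget D b → V
  | .I G => G.p
  | .II G => G.p
  | .III G => G.p

def ChainGadget.qq {D : V → V → Prop} {b : ℕ} : ChainGadget D b → V
  | .I G => G.q
  | .II G => G.q
  | .III G => G.q

def ChainGadget.verts {D : V → V → Prop} {b : ℕ} : ChainGadget D b → Set V
  | .I G => G.verts
  | .II G => G.verts
  | .III G => G.verts

def ChainGadget.arcs {D : V → V → Prop} {b : ℕ} : ChainGadget D b → V → V → Prop
  | .I G => G.arcs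
  | .II G => G.arcs
  | .III G => G.arcs

/-- A chain in `D`: a directed path (spine) `v 0, …, v m`, a set `A2` of spine arcs,
and a gadget for every arc in `A2` (arcs outside `A2` form `A1` and carry trivial
gadgets), such that each gadget has the endpoints of its arc as designated vertices,
meets the spine only in these two vertices, and two distinct gadgets meet only in
spine vertices. -/
structure GChain (D : V → V → Prop) (b m : ℕ) where
  v : Fin (m + 1) → V
  inj : Function.Injective v
  spine : ∀ i : Fin m, D (v i.castSucc) (v i.succ)
  A2 : Finset (Fin m)
  gad : (i : Fin m) → i ∈ A2 → ChainGadget D b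
  hp : ∀ (i : Fin m) (hi : i ∈ A2), (gad i hi).pp = v i.castSucc
  hq : ∀ (i : Fin m) (hi : i ∈ A2), (gad i hi).qq = v i.succ
  hspine : ∀ (i : Fin m) (hi : i ∈ A2) (j : Fin (m + 1)),
    v j ∈ (gad i hi).verts → j = i.castSucc ∨ j = i.succ
  hdisj : ∀ (i : Fin m) (hi : i ∈ A2) (j : Fin m) (hj : j ∈ A2), i ≠ j →
    ∀ x, x ∈ (gad i hi).verts → x ∈ (gad j hj).verts → ∃ k, x = v k

def GChain.verts {D : V → V → Prop} {b m : ℕ} (C : GChain D b m) : Set V :=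
  Set.range C.v ∪ {x | ∃ (i : Fin m) (hi : i ∈ C.A2), x ∈ (C.gad i hi).verts}

def GChain.arcs {D : V → V → Prop} {b m : ℕ} (C : GChain D b m) : V → V → Prop :=
  fun x y => (∃ i : Fin m, x = C.v i.castSucc ∧ y = C.v i.succ) ∨
    (∃ (i : Fin m) (hi : i ∈ C.A2), (C.gad i hi).arcs x y)

/-- The vertex set of the gadget `G_e` sitting on the `i`-th spine arc
(the trivial gadget for arcs of `A1`). -/
def GChain.gadVerts {D : V → V → Prop} {b m : ℕ} (C : GChain D b m) (i : Fin m) :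
    Set V :=
  if h : i ∈ C.A2 then (C.gad i h).verts else {C.v i.castSucc, C.v i.succ}

/-- An arbitrary gadget: trivial, type I (with `g = 4b²`), basic or extended type II,
or type III. -/
inductive GadgetAny (D : V → V → Prop) (b : ℕ) where
  | triv : TrivGadget D → GadgetAny D b
  | I : TypeIGadget D (4 * b ^ 2) → GadgetAny D b
  | II : BasicIIGadget D b → GadgetAny D b
  | IIext : ExtIIGadget D b → GadgetAny D b
  | III : TypeIIIGadget D b → GadgetAny D b

def GadgetAny.pp {D : V → V → Prop} {b : ℕ} : GadgetAny D b → V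
  | .triv G => G.p
  | .I G => G.p
  | .II G => G.p
  | .IIext G => G.p
  | .III G => G.p

def GadgetAny.qq {D : V → V → Prop} {b : ℕ} : GadgetAny D b → V
  | .triv G => G.q
  | .I G => G.q
  | .II G => G.q
  | .IIext G => G.q
  | .III G => G.q

def GadgetAny.verts {D : V → V → Prop} {b : ℕ} : GadgetAny D b → Set V
  | .triv G => G.verts
  | .I G => G.verts
  | .II G => G.verts
  | .IIext G => G.verts
  | .III G => G.verts

def GadgetAny.arcs {D : V → V → Prop} {b : ℕ} : GadgetAny D b → V → V → Prop
  | .triv G => G.arcs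
  | .I G => G.arcs
  | .II G => G.arcs
  | .IIext G => G.arcs
  | .III G => G.arcs


section Stmt9Helpers
-- helpers over Paper defs
variable {A : V → V → Prop}

lemma adjIn_of_getElem {l : List V} {i : ℕ} (h : i + 1 < l.length) :
    adjIn l (l[i]'(by omega)) (l[i+1]'h) := by
  refine ⟨l.take i, l.drop (i+2), ?_⟩
  conv_lhs => rw [← List.take_append_drop i l]
  rw [List.drop_eq_getElem_cons (show i < l.length by omega),
    List.drop_eq_getElem_cons (show i+1 < l.length from h)]

lemma chain'_adjIn (l : List V) : l.Chain' (adjIn l) := by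
  refine List.isChain_iff_getElem.mpr ?_
  intro i h
  simpa [List.get_eq_getElem] using adjIn_of_getElem (l := l) (i := i) (by omega)

/-- segment of `l` with indices in `[a, c)`. -/
def seg (l : List V) (a c : ℕ) : List V := (l.drop a).take (c - a)

lemma seg_infix (l : List V) (a c : ℕ) : seg l a c <:+: l :=
  ((l.drop a).take_prefix _).isInfix.trans (l.drop_suffix a).isInfix

lemma seg_length (l : List V) (a c : ℕ) :
    (seg l a c).length = min (c - a) (l.length - a) := by
  simp [seg]

lemma seg_getElem? (l : List V) (a c i : ℕ) :
    (seg l a c)[i]? = if i < c - a then l[a+i]? else none := by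
  simp [seg, List.getElem?_take, List.getElem?_drop]

lemma seg_ne_nil {l : List V} {a c : ℕ} (hac : a < c) (ha : a < l.length) :
    seg l a c ≠ [] := by
  have : 0 < (seg l a c).length := by rw [seg_length]; omega
  exact List.ne_nil_of_length_pos this

lemma seg_head? {l : List V} {a c : ℕ} (hac : a < c) (ha : a < l.length) :
    (seg l a c).head? = some (l[a]'ha) := by
  rw [List.head?_eq_getElem?, seg_getElem?, if_pos (by omega)]
  simp

lemma seg_getLast? {l : List V} {a c : ℕ} (hac : a < c) (hc : c ≤ l.length) :
    (seg l a c).getLast? = some (l[c-1]'(by omega)) := by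
  rw [List.getLast?_eq_getElem?, seg_length, seg_getElem?]
  have h1 : min (c - a) (l.length - a) = c - a := by omega
  rw [h1, if_pos (by omega)]
  have : a + (c - a - 1) = c - 1 := by omega
  rw [this]
  simp

lemma mem_seg {l : List V} {a c : ℕ} {y : V} (h : y ∈ seg l a c) :
    ∃ i, a ≤ i ∧ i < c ∧ l[i]? = some y := by
  obtain ⟨n, hn, rfl⟩ := List.mem_iff_getElem.mp h
  have h2 : (seg l a c)[n]? = some ((seg l a c)[n]'hn) := List.getElem?_eq_getElem hn
  rw [seg_getElem?] at h2
  by_cases hlt : n < c - a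
  · rw [if_pos hlt] at h2
    exact ⟨a + n, by omega, by omega, h2⟩
  · rw [if_neg hlt] at h2; exact absurd h2 (by simp)

lemma seg_nodup {l : List V} (h : l.Nodup) (a c : ℕ) : (seg l a c).Nodup :=
  ((seg_infix l a c).sublist).nodup h

lemma seg_subset {l : List V} {a c : ℕ} {y : V} (h : y ∈ seg l a c) : y ∈ l :=
  (seg_infix l a c).sublist.mem h

lemma dipath_append {L M : List V} (hL : IsDipathList A L) (hM : IsDipathList A M)
    (hdisj : ∀ x ∈ L, x ∉ M)
    (harc : ∀ x y, L.getLast? = some x → M.head? = some y → A x y) :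
    IsDipathList A (L ++ M) :=
  ⟨by simp [hL.1], List.nodup_append'.mpr ⟨hL.2.1, hM.2.1, fun a ha hb => hdisj a ha hb⟩,
    List.isChain_append.mpr ⟨hL.2.2, hM.2.2, fun x hx y hy => harc x y hx hy⟩⟩

lemma head?_append_left {L M : List V} (h : L ≠ []) : (L ++ M).head? = L.head? := by
  cases L with
  | nil => exact absurd rfl h
  | cons a l => simp

lemma getLast?_append_right {L M : List V} (h : M ≠ []) :
    (L ++ M).getLast? = M.getLast? := by
  rw [List.getLast?_append]
  have : M.getLast?.isSome := by
    cases M with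
    | nil => exact absurd rfl h
    | cons a l => simp [List.getLast?_isSome]
  obtain ⟨y, hy⟩ := Option.isSome_iff_exists.mp this
  simp [hy]

lemma dipath_singleton (x : V) : IsDipathList A [x] := ⟨by simp, by simp, List.isChain_singleton _⟩

lemma getElem?_inj {l : List V} (h : l.Nodup) {i j : ℕ} {y : V}
    (hi : l[i]? = some y) (hj : l[j]? = some y) : i = j := by
  obtain ⟨hi', hi''⟩ := List.getElem?_eq_some_iff.mp hi
  obtain ⟨hj', hj''⟩ := List.getElem?_eq_some_iff.mp hj
  exact (List.Nodup.getElem_inj_iff h).mp (by rw [hi'', hj''])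

lemma alt_one (b : ℕ) {L : List V} {s x : V} (hL : IsDipathList A L)
    (h1 : L.head? = some s) (h2 : L.getLast? = some x) :
    ∃ R : AltPath A 1 b, R.t ⟨0, by omega⟩ = x ∧ R.s ⟨0, by omega⟩ = s ∧
      ∀ z, z ∈ R.verts ↔ z ∈ L := by
  refine ⟨⟨fun _ => s, fun _ => x, fun _ => L, Fin.elim0, fun _ => hL, fun _ => h1,
    fun _ => h2, fun i => i.elim0, fun i => i.elim0, fun i => i.elim0,
    fun i h1 h2 => by omega, fun i => i.elim0,
    fun i j hij => absurd (Subsingleton.elim i j) hij, fun i => i.elim0,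
    fun i j => j.elim0⟩, rfl, rfl, ?_⟩
  intro z
  constructor
  · rintro (⟨i, hi⟩ | ⟨i, hi⟩)
    · exact hi
    · exact i.elim0
  · exact fun h => Or.inl ⟨⟨0, by omega⟩, h⟩

lemma alt_two (b : ℕ) {L L' : List V} {qv s₂ x : V}
    (hL : IsDipathList A L) (hL' : IsDipathList A L')
    (hLh : L.head? = some s₂) (hL'h : L'.head? = some s₂)
    (hLl : L.getLast? = some x) (hL'l : L'.getLast? = some qv)
    (hq : qv ∉ L) (hlen : b + 1 ≤ L'.length)
    (hint : ∀ y ∈ L, y ∈ L' → y = s₂) :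
    ∃ R : AltPath A 2 b, R.t ⟨1, by omega⟩ = x ∧ R.s ⟨0, by omega⟩ = qv ∧
      ∀ z, z ∈ R.verts ↔ (z = qv ∨ z ∈ L ∨ z ∈ L') := by
  refine ⟨⟨![qv, s₂], ![qv, x], ![[qv], L], ![L'], ?_, ?_, ?_, ?_, ?_, ?_, ?_, ?_,
    ?_, ?_, ?_⟩, rfl, rfl, ?_⟩
  · intro i; fin_cases i
    · exact ⟨by simp, by simp, List.isChain_singleton _⟩
    · exact hL
  · intro i; fin_cases i <;> simp [hLh]
  · intro i; fin_cases i <;> simp [hLl]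
  · intro i; fin_cases i; exact hL'
  · intro i; fin_cases i; simpa using hL'h
  · intro i; fin_cases i; simpa using hL'l
  · intro i h1 h2; omega
  · intro i; fin_cases i; simpa using hlen
  · intro i j hij
    fin_cases i <;> fin_cases j
    · exact absurd rfl hij
    · intro y hy; simp at hy; subst hy; simpa using hq
    · intro y hy hc; simp at hc; subst hc; exact hq hy
    · exact absurd rfl hij
  · intro i j hij; fin_cases i <;> fin_cases j <;> simp_all
  · intro i j y hyQ hyQ'
    fin_cases j
    fin_cases i
    · left
      refine ⟨rfl, ?_⟩
      simp at hyQ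
      simp [hyQ]
    · right
      refine ⟨rfl, ?_⟩
      simpa using hint y (by simpa using hyQ) (by simpa using hyQ')
  · intro z
    constructor
    · rintro (⟨i, hi⟩ | ⟨i, hi⟩)
      · fin_cases i
        · simp at hi; exact Or.inl hi
        · exact Or.inr (Or.inl (by simpa using hi))
      · fin_cases i; exact Or.inr (Or.inr (by simpa using hi))
    · rintro (rfl | h | h)
      · exact Or.inl ⟨0, by simp⟩
      · exact Or.inl ⟨1, by simpa using h⟩
      · exact Or.inr ⟨0, by simpa using h⟩

lemma mem_of_getElem? {l : List V} {i : ℕ} {y : V} (h : l[i]? = some y) : y ∈ l := by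
  obtain ⟨h1, h2⟩ := List.getElem?_eq_some_iff.mp h
  exact h2 ▸ List.getElem_mem h1

variable {D : V → V → Prop} {b : ℕ}

namespace ExtIIGadget
variable (G : ExtIIGadget D b)

lemma arc_adj1 {x y : V} (h : adjIn G.P₁ x y) : G.arcs x y := Or.inl h
lemma arc_toq {x : V} (h : x ∈ G.P₁) : G.arcs x G.q := Or.inr (Or.inl ⟨h, rfl⟩)
lemma arc_adj2 {x y : V} (h : adjIn G.P₂ x y) : G.arcs x y := Or.inr (Or.inr (Or.inl h))

lemma r_getElem? : G.P₁[0]? = some G.r := by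
  rw [← List.head?_eq_getElem?]; exact G.first₁

lemma p_getElem? : G.P₁[G.P₁.length - 1]? = some G.p := by
  rw [← List.getLast?_eq_getElem?]; exact G.last₁

lemma r_getElem2? : G.P₂[G.P₂.length - 1]? = some G.r := by
  rw [← List.getLast?_eq_getElem?]; exact G.last₂

lemma lenP1 (hb : 1 ≤ b) : b + 1 ≤ G.P₁.length := by
  have h := G.len₁
  have h2 : b * b ≥ 1 * 1 := Nat.mul_le_mul hb hb
  have h3 : b ^ 2 = b * b := pow_two b
  omega

lemma lenP2 : b + 1 ≤ G.P₂.length := G.len₂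

lemma r_mem : G.r ∈ G.P₁ := mem_of_getElem? G.r_getElem?

lemma p_mem : G.p ∈ G.P₁ := mem_of_getElem? G.p_getElem?

lemma p_not_mem_P2 (hb : 1 ≤ b) : G.p ∉ G.P₂ := by
  intro h
  have hpr : G.p = G.r := G.inter _ G.p_mem h
  have hN := G.lenP1 hb
  have := getElem?_inj G.path₁.2.1 G.p_getElem? (hpr ▸ G.r_getElem?)
  omega

lemma seg1_dipath {a c : ℕ} (hac : a < c) (ha : a < G.P₁.length) :
    IsDipathList G.arcs (seg G.P₁ a c) :=
  ⟨seg_ne_nil hac ha, seg_nodup G.path₁.2.1 _ _,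
    ((chain'_adjIn G.P₁).infix (seg_infix _ _ _)).imp fun _ _ h => G.arc_adj1 h⟩

lemma seg2_dipath {a c : ℕ} (hac : a < c) (ha : a < G.P₂.length) :
    IsDipathList G.arcs (seg G.P₂ a c) :=
  ⟨seg_ne_nil hac ha, seg_nodup G.path₂.2.1 _ _,
    ((chain'_adjIn G.P₂).infix (seg_infix _ _ _)).imp fun _ _ h => G.arc_adj2 h⟩

lemma seg1q_dipath {a c : ℕ} (hac : a < c) (hc : c ≤ G.P₁.length) :
    IsDipathList G.arcs (seg G.P₁ a c ++ [G.q]) := by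
  refine dipath_append (G.seg1_dipath hac (by omega)) (dipath_singleton _) ?_ ?_
  · intro x hx hx2
    simp at hx2
    exact G.hq (hx2 ▸ seg_subset hx)
  · intro x y hx hy
    simp at hy
    subst hy
    have h2 := seg_getLast? (l := G.P₁) hac hc
    rw [hx] at h2
    have hx2 : G.P₁[c-1]'(by omega) = x := (Option.some.inj h2).symm
    exact G.arc_toq (hx2 ▸ List.getElem_mem _)

lemma P2_dipath : IsDipathList G.arcs G.P₂ :=
  ⟨G.path₂.1, G.path₂.2.1, (chain'_adjIn _).imp fun _ _ h => G.arc_adj2 h⟩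

lemma P2q_dipath : IsDipathList G.arcs (G.P₂ ++ [G.q]) := by
  refine dipath_append G.P2_dipath (dipath_singleton _) ?_ ?_
  · intro x hx hx2
    simp at hx2
    exact G.hq₂ (hx2 ▸ hx)
  · intro x y hx hy
    simp at hy
    subst hy
    rw [G.last₂] at hx
    exact (Option.some.inj hx).symm ▸ G.arc_toq G.r_mem

lemma con_r (hb : 1 ≤ b) :
    ∃ R : AltPath G.arcs 2 b, R.t ⟨1, by omega⟩ = G.r ∧ R.s ⟨0, by omega⟩ = G.q ∧
      ∀ z ∈ R.verts, z = G.q ∨ ∃ i, i < b ∧ G.P₁[i]? = some z := by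
  have hN : b + 1 ≤ G.P₁.length := G.lenP1 hb
  have h0b : (0:ℕ) < b := hb
  have h0N : 0 < G.P₁.length := by omega
  have hr : G.P₁[0]'h0N = G.r := by
    have h := G.r_getElem?
    rw [List.getElem?_eq_getElem h0N] at h
    exact Option.some.inj h
  obtain ⟨R, ht, hs, hv⟩ := alt_two (A := G.arcs) b (qv := G.q) (s₂ := G.r) (x := G.r)
    (L := [G.r]) (L' := seg G.P₁ 0 b ++ [G.q])
    (dipath_singleton _) (G.seg1q_dipath h0b (by omega))
    (by simp)
    (by rw [head?_append_left (seg_ne_nil h0b h0N), seg_head? h0b h0N, hr])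
    (by simp)
    (by rw [getLast?_append_right (by simp)]; simp)
    (by simp; intro h; exact G.hq (h ▸ G.r_mem))
    (by rw [List.length_append, seg_length]; simp; omega)
    (by simp)
  refine ⟨R, ht, hs, ?_⟩
  intro z hz
  rcases (hv z).mp hz with rfl | h | h
  · exact Or.inl rfl
  · simp at h
    subst h
    exact Or.inr ⟨0, h0b, G.r_getElem?⟩
  · rcases List.mem_append.mp h with h | h
    · obtain ⟨i, _, hib, hi⟩ := mem_seg h
      exact Or.inr ⟨i, hib, hi⟩
    · simp at h
      exact Or.inl h

lemma con_A (hb : 1 ≤ b) {z0 y1 : V} (hz0 : G.P₂.head? = some z0)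
    (hy1 : G.P₁[1]? = some y1) (hD : D z0 y1)
    {i : ℕ} {x : V} (hi1 : 1 ≤ i) (hi2 : i + 2 ≤ G.P₁.length) (hx : G.P₁[i]? = some x) :
    ∃ R : AltPath G.arcs 2 b, R.t ⟨1, by omega⟩ = x ∧ R.s ⟨0, by omega⟩ = G.q ∧
      ∀ z ∈ R.verts, z = G.q ∨ z ∈ G.P₂ ∨ ∃ t, 1 ≤ t ∧ t ≤ i ∧ G.P₁[t]? = some z := by
  have hN : b + 1 ≤ G.P₁.length := G.lenP1 hb
  have hM : b + 1 ≤ G.P₂.length := G.lenP2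
  have hiN : i < G.P₁.length := by omega
  have h1N : 1 < G.P₁.length := by omega
  have hz0' : G.P₂[0]? = some z0 := by rw [← List.head?_eq_getElem?]; exact hz0
  have hz0P2 : z0 ∈ G.P₂ := mem_of_getElem? hz0'
  have hz0P1 : z0 ∉ G.P₁ := by
    intro h
    have := getElem?_inj G.path₂.2.1 hz0' ((G.inter _ h hz0P2) ▸ G.r_getElem2?)
    omega
  have hxi : G.P₁[i]'hiN = x := by
    rw [List.getElem?_eq_getElem hiN] at hx
    exact Option.some.inj hx
  have hy1' : G.P₁[1]'h1N = y1 := by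
    rw [List.getElem?_eq_getElem h1N] at hy1
    exact Option.some.inj hy1
  have hLdip : IsDipathList G.arcs ([z0] ++ seg G.P₁ 1 (i+1)) := by
    refine dipath_append (dipath_singleton _) (G.seg1_dipath (by omega) h1N) ?_ ?_
    · intro y hy hy2
      simp at hy
      exact hz0P1 (hy ▸ seg_subset hy2)
    · intro u v hu hv
      simp at hu
      subst hu
      rw [seg_head? (by omega) h1N] at hv
      have hv' : v = G.P₁[1]'h1N := (Option.some.inj hv).symm
      exact Or.inr (Or.inr (Or.inr ⟨by rw [hv', hy1']; exact hD,
        Or.inl ⟨hz0, by rw [hv']; exact List.getElem?_eq_getElem h1N⟩⟩))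
  obtain ⟨R, ht, hs, hv⟩ := alt_two (A := G.arcs) b (qv := G.q) (s₂ := z0) (x := x)
    (L := [z0] ++ seg G.P₁ 1 (i+1)) (L' := G.P₂ ++ [G.q])
    hLdip G.P2q_dipath
    (by rw [head?_append_left (by simp)]; simp)
    (by rw [head?_append_left G.path₂.1]; exact hz0)
    (by rw [getLast?_append_right (seg_ne_nil (by omega) h1N),
        seg_getLast? (by omega) (by omega)]
        simp only [Nat.add_sub_cancel]
        exact congrArg some hxi)
    (by rw [getLast?_append_right (by simp)]; simp)
    (by
      intro h
      rcases List.mem_append.mp h with h | h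
      · simp at h; exact G.hq₂ (h ▸ hz0P2)
      · exact G.hq (seg_subset h))
    (by simp [List.length_append]; omega)
    (by
      intro y hy hy'
      rcases List.mem_append.mp hy with h | h
      · simpa using h
      · exfalso
        obtain ⟨t, ht1, ht2, ht3⟩ := mem_seg h
        rcases List.mem_append.mp hy' with h' | h'
        · have := getElem?_inj G.path₁.2.1 ht3
            ((G.inter _ (seg_subset h) h') ▸ G.r_getElem?)
          omega
        · simp at h'
          exact G.hq (h' ▸ seg_subset h))
  refine ⟨R, ht, hs, ?_⟩
  intro z hz
  rcases (hv z).mp hz with rfl | h | h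
  · exact Or.inl rfl
  · rcases List.mem_append.mp h with h | h
    · simp at h
      exact Or.inr (Or.inl (h ▸ hz0P2))
    · obtain ⟨t, ht1, ht2, ht3⟩ := mem_seg h
      exact Or.inr (Or.inr ⟨t, ht1, by omega, ht3⟩)
  · rcases List.mem_append.mp h with h | h
    · exact Or.inr (Or.inl h)
    · simp at h
      exact Or.inl h

lemma con_B (hb : 1 ≤ b) {k : ℕ} {w z0 : V}
    (hk1 : 1 ≤ k) (hkN : k + 2 ≤ G.P₁.length) (hw : G.P₁[k]? = some w)
    (hz0 : G.P₂.head? = some z0) (hD : D w z0)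
    {c d : ℕ} {x : V} (hc1 : 1 ≤ c) (hck : c ≤ k) (hcd : c ≤ d)
    (hdN : d + 2 ≤ G.P₁.length) (hcase : d = c ∨ c = k) (hx : G.P₁[d]? = some x) :
    ∃ R : AltPath G.arcs 2 b, R.t ⟨1, by omega⟩ = x ∧ R.s ⟨0, by omega⟩ = G.q ∧
      ∀ z ∈ R.verts, z = G.q ∨ z ∈ G.P₂ ∨
        ∃ t, c ≤ t ∧ (t ≤ k ∨ t ≤ d) ∧ G.P₁[t]? = some z := by
  have hN : b + 1 ≤ G.P₁.length := G.lenP1 hb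
  have hM : b + 1 ≤ G.P₂.length := G.lenP2
  have hcN : c < G.P₁.length := by omega
  have hdN' : d < G.P₁.length := by omega
  have hkN' : k < G.P₁.length := by omega
  have hwr : w ≠ G.r := by
    intro h
    have := getElem?_inj G.path₁.2.1 hw (h ▸ G.r_getElem?)
    omega
  have hwP1 : w ∈ G.P₁ := mem_of_getElem? hw
  have hxd : G.P₁[d]'hdN' = x := by
    rw [List.getElem?_eq_getElem hdN'] at hx
    exact Option.some.inj hx
  have hseg_not_P2 : ∀ y ∈ seg G.P₁ c (k+1), y ∉ G.P₂ ++ [G.q] := by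
    intro y hy hy2
    obtain ⟨t, ht1, ht2, ht3⟩ := mem_seg hy
    rcases List.mem_append.mp hy2 with h' | h'
    · have := getElem?_inj G.path₁.2.1 ht3
        ((G.inter _ (seg_subset hy) h') ▸ G.r_getElem?)
      omega
    · simp at h'
      exact G.hq (h' ▸ seg_subset hy)
  have hL'dip : IsDipathList G.arcs (seg G.P₁ c (k+1) ++ (G.P₂ ++ [G.q])) := by
    refine dipath_append (G.seg1_dipath (by omega) hcN) G.P2q_dipath hseg_not_P2 ?_
    intro u v hu hv
    rw [seg_getLast? (by omega) (by omega)] at hu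
    simp only [Nat.add_sub_cancel] at hu
    have hu' : u = w := by
      have := List.getElem?_eq_getElem hkN'
      rw [hw] at this
      exact (Option.some.inj hu).symm.trans (Option.some.inj this.symm)
    rw [head?_append_left G.path₂.1, hz0] at hv
    have hv' : v = z0 := (Option.some.inj hv).symm
    subst hu' hv'
    exact Or.inr (Or.inr (Or.inr ⟨hD, Or.inr ⟨hwP1, hwr, hz0⟩⟩))
  obtain ⟨R, ht, hs, hv⟩ := alt_two (A := G.arcs) b (qv := G.q)
    (s₂ := G.P₁[c]'hcN) (x := x)
    (L := seg G.P₁ c (d+1)) (L' := seg G.P₁ c (k+1) ++ (G.P₂ ++ [G.q]))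
    (G.seg1_dipath (by omega) hcN) hL'dip
    (seg_head? (by omega) hcN)
    (by rw [head?_append_left (seg_ne_nil (by omega) hcN)]
        exact seg_head? (by omega) hcN)
    (by rw [seg_getLast? (by omega) (by omega)]
        simp only [Nat.add_sub_cancel]
        exact congrArg some hxd)
    (by rw [getLast?_append_right (by simp), getLast?_append_right (by simp)]; simp)
    (fun h => G.hq (seg_subset h))
    (by simp [List.length_append, seg_length]; omega)
    (by
      intro y hy hy'
      obtain ⟨t, ht1, ht2, ht3⟩ := mem_seg hy
      have hyc : t = c → y = G.P₁[c]'hcN := by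
        intro h
        subst h
        rw [List.getElem?_eq_getElem hcN] at ht3
        exact (Option.some.inj ht3).symm
      rcases List.mem_append.mp hy' with h' | h'
      · obtain ⟨t', ht1', ht2', ht3'⟩ := mem_seg h'
        have htt : t = t' := getElem?_inj G.path₁.2.1 ht3 ht3'
        rcases hcase with h | h
        · exact hyc (by omega)
        · exact hyc (by omega)
      · exfalso
        rcases List.mem_append.mp h' with h'' | h''
        · have := getElem?_inj G.path₁.2.1 ht3
            ((G.inter _ (seg_subset hy) h'') ▸ G.r_getElem?)
          omega
        · simp at h''
          exact G.hq (h'' ▸ seg_subset hy))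
  refine ⟨R, ht, hs, ?_⟩
  intro z hz
  rcases (hv z).mp hz with rfl | h | h
  · exact Or.inl rfl
  · obtain ⟨t, ht1, ht2, ht3⟩ := mem_seg h
    exact Or.inr (Or.inr ⟨t, ht1, Or.inr (by omega), ht3⟩)
  · rcases List.mem_append.mp h with h | h
    · obtain ⟨t, ht1, ht2, ht3⟩ := mem_seg h
      exact Or.inr (Or.inr ⟨t, ht1, Or.inl (by omega), ht3⟩)
    · rcases List.mem_append.mp h with h | h
      · exact Or.inr (Or.inl h)
      · simp at h
        exact Or.inl h

lemma con_z (hb : 1 ≤ b) {j : ℕ} {x : V} (hj : j + 2 ≤ G.P₂.length)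
    (hx : G.P₂[j]? = some x) :
    ∃ R : AltPath G.arcs 2 b, R.t ⟨1, by omega⟩ = x ∧ R.s ⟨0, by omega⟩ = G.q ∧
      ∀ z ∈ R.verts, z = G.q ∨ z ∈ G.P₂ ∨
        ∃ t, 1 ≤ t ∧ t < b ∧ G.P₁[t]? = some z := by
  have hN : b + 1 ≤ G.P₁.length := G.lenP1 hb
  have hM : b + 1 ≤ G.P₂.length := G.lenP2
  have hjM : j < G.P₂.length := by omega
  have hxj : G.P₂[j]'hjM = x := by
    rw [List.getElem?_eq_getElem hjM] at hx
    exact Option.some.inj hx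
  have hxP2 : x ∈ G.P₂ := mem_of_getElem? hx
  have hqx : G.q ∉ [x] := by simp; intro h; exact G.hq₂ (h ▸ hxP2)
  have hsegP2_last : (seg G.P₂ j G.P₂.length).getLast? = some G.r := by
    rw [seg_getLast? (by omega) (by omega)]
    have h2 := G.r_getElem2?
    rw [List.getElem?_eq_getElem (by omega : G.P₂.length - 1 < G.P₂.length)] at h2
    exact congrArg some (Option.some.inj h2)
  have hr0 : G.P₁[0]'(by omega) = G.r := by
    have h := G.r_getElem?
    rw [List.getElem?_eq_getElem (by omega : 0 < G.P₁.length)] at h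
    exact Option.some.inj h
  rcases Nat.lt_or_ge b 2 with hb2 | hb2
  · -- b = 1
    have hL'dip : IsDipathList G.arcs (seg G.P₂ j G.P₂.length ++ [G.q]) := by
      refine dipath_append (G.seg2_dipath (by omega) hjM) (dipath_singleton _) ?_ ?_
      · intro y hy hy2
        simp at hy2
        exact G.hq₂ (hy2 ▸ seg_subset hy)
      · intro u v hu hv
        simp at hv
        subst hv
        rw [hsegP2_last] at hu
        exact (Option.some.inj hu).symm ▸ G.arc_toq G.r_mem
    obtain ⟨R, ht, hs, hv⟩ := alt_two (A := G.arcs) b (qv := G.q) (s₂ := x) (x := x)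
      (L := [x]) (L' := seg G.P₂ j G.P₂.length ++ [G.q])
      (dipath_singleton _) hL'dip
      (by simp)
      (by rw [head?_append_left (seg_ne_nil (by omega) hjM),
          seg_head? (by omega) hjM]
          exact congrArg some hxj)
      (by simp)
      (by rw [getLast?_append_right (by simp)]; simp)
      hqx
      (by simp [List.length_append, seg_length]; omega)
      (by simp)
    refine ⟨R, ht, hs, ?_⟩
    intro z hz
    rcases (hv z).mp hz with rfl | h | h
    · exact Or.inl rfl
    · simp at h
      exact Or.inr (Or.inl (h ▸ hxP2))
    · rcases List.mem_append.mp h with h | h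
      · exact Or.inr (Or.inl (seg_subset h))
      · simp at h
        exact Or.inl h
  · -- b ≥ 2
    have hL'dip : IsDipathList G.arcs
        (seg G.P₂ j G.P₂.length ++ (seg G.P₁ 1 b ++ [G.q])) := by
      refine dipath_append (G.seg2_dipath (by omega) hjM)
        (G.seg1q_dipath (by omega) (by omega)) ?_ ?_
      · intro y hy hy2
        rcases List.mem_append.mp hy2 with h' | h'
        · obtain ⟨t, ht1, ht2, ht3⟩ := mem_seg h'
          have := getElem?_inj G.path₁.2.1 ht3
            ((G.inter _ (seg_subset h') (seg_subset hy)) ▸ G.r_getElem?)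
          omega
        · simp at h'
          exact G.hq₂ (h' ▸ seg_subset hy)
      · intro u v hu hv
        rw [hsegP2_last] at hu
        rw [head?_append_left (seg_ne_nil (by omega) (by omega)),
          seg_head? (by omega) (by omega)] at hv
        have hu' : u = G.r := (Option.some.inj hu).symm
        have hv' : v = G.P₁[1]'(by omega) := (Option.some.inj hv).symm
        rw [hu', hv', ← hr0]
        exact G.arc_adj1 (adjIn_of_getElem (by omega))
    obtain ⟨R, ht, hs, hv⟩ := alt_two (A := G.arcs) b (qv := G.q) (s₂ := x) (x := x)
      (L := [x]) (L' := seg G.P₂ j G.P₂.length ++ (seg G.P₁ 1 b ++ [G.q]))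
      (dipath_singleton _) hL'dip
      (by simp)
      (by rw [head?_append_left (seg_ne_nil (by omega) hjM),
          seg_head? (by omega) hjM]
          exact congrArg some hxj)
      (by simp)
      (by rw [getLast?_append_right (by simp), getLast?_append_right (by simp)]; simp)
      hqx
      (by simp [List.length_append, seg_length]; omega)
      (by simp)
    refine ⟨R, ht, hs, ?_⟩
    intro z hz
    rcases (hv z).mp hz with rfl | h | h
    · exact Or.inl rfl
    · simp at h
      exact Or.inr (Or.inl (h ▸ hxP2))
    · rcases List.mem_append.mp h with h | h
      · exact Or.inr (Or.inl (seg_subset h))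
      · rcases List.mem_append.mp h with h | h
        · obtain ⟨t, ht1, ht2, ht3⟩ := mem_seg h
          exact Or.inr (Or.inr ⟨t, ht1, by omega, ht3⟩)
        · simp at h
          exact Or.inl h

lemma con_pw (hb : 1 ≤ b) {z0 : V} (hz0 : G.P₂.head? = some z0) (hD : D G.p z0)
    {i : ℕ} {x : V} (hi1 : 1 ≤ i) (hi2 : i + 2 ≤ G.P₁.length) (hx : G.P₁[i]? = some x) :
    ∃ R : AltPath G.arcs 1 b, R.t ⟨0, by omega⟩ = x ∧ R.s ⟨0, by omega⟩ = G.p ∧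
      ∀ z ∈ R.verts, z = G.p ∨ z ∈ G.P₂ ∨
        ∃ t, 1 ≤ t ∧ t ≤ i ∧ G.P₁[t]? = some z := by
  have hN : b + 1 ≤ G.P₁.length := G.lenP1 hb
  have hM : b + 1 ≤ G.P₂.length := G.lenP2
  have hiN : i < G.P₁.length := by omega
  have hxi : G.P₁[i]'hiN = x := by
    rw [List.getElem?_eq_getElem hiN] at hx
    exact Option.some.inj hx
  have hr0 : G.P₁[0]'(by omega) = G.r := by
    have h := G.r_getElem?
    rw [List.getElem?_eq_getElem (by omega : 0 < G.P₁.length)] at h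
    exact Option.some.inj h
  have hpr : G.p ≠ G.r := by
    intro h
    have := getElem?_inj G.path₁.2.1 G.p_getElem? (h ▸ G.r_getElem?)
    omega
  have hinner : IsDipathList G.arcs (G.P₂ ++ seg G.P₁ 1 (i+1)) := by
    refine dipath_append G.P2_dipath (G.seg1_dipath (by omega) (by omega)) ?_ ?_
    · intro y hy hy2
      obtain ⟨t, ht1, ht2, ht3⟩ := mem_seg hy2
      have := getElem?_inj G.path₁.2.1 ht3
        ((G.inter _ (seg_subset hy2) hy) ▸ G.r_getElem?)
      omega
    · intro u v hu hv
      rw [G.last₂] at hu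
      rw [seg_head? (by omega) (by omega)] at hv
      have hu' : u = G.r := (Option.some.inj hu).symm
      have hv' : v = G.P₁[1]'(by omega) := (Option.some.inj hv).symm
      rw [hu', hv', ← hr0]
      exact G.arc_adj1 (adjIn_of_getElem (by omega))
  have hLdip : IsDipathList G.arcs ([G.p] ++ (G.P₂ ++ seg G.P₁ 1 (i+1))) := by
    refine dipath_append (dipath_singleton _) hinner ?_ ?_
    · intro y hy hy2
      simp at hy
      subst hy
      rcases List.mem_append.mp hy2 with h' | h'
      · exact G.p_not_mem_P2 hb h'
      · obtain ⟨t, ht1, ht2, ht3⟩ := mem_seg h'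
        have := getElem?_inj G.path₁.2.1 ht3 G.p_getElem?
        omega
    · intro u v hu hv
      simp at hu
      subst hu
      rw [head?_append_left G.path₂.1, hz0] at hv
      have hv' : v = z0 := (Option.some.inj hv).symm
      subst hv'
      exact Or.inr (Or.inr (Or.inr ⟨hD, Or.inr ⟨G.p_mem, hpr, hz0⟩⟩))
  obtain ⟨R, ht, hs, hv⟩ := alt_one (A := G.arcs) b (s := G.p) (x := x) hLdip
    (by rw [head?_append_left (by simp)]; simp)
    (by rw [getLast?_append_right (by simp [G.path₂.1]),
        getLast?_append_right (seg_ne_nil (by omega) (by omega)),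
        seg_getLast? (by omega) (by omega)]
        simp only [Nat.add_sub_cancel]
        exact congrArg some hxi)
  refine ⟨R, ht, hs, ?_⟩
  intro z hz
  rcases List.mem_append.mp ((hv z).mp hz) with h | h
  · simp at h
    exact Or.inl h
  · rcases List.mem_append.mp h with h | h
    · exact Or.inr (Or.inl h)
    · obtain ⟨t, ht1, ht2, ht3⟩ := mem_seg h
      exact Or.inr (Or.inr ⟨t, ht1, by omega, ht3⟩)

end ExtIIGadget


end Stmt9Helpers

end Paper

namespace Paper

/-- Let `G` be an extended type-II gadget. (1) For every vertex
`x ∈ V(G) \ {p,q}` there are `a ∈ {1,2}` and an `(a,b)`-alternating path `R` in `G`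
with `t_a(R) = x`, `s_1(R) ∈ {p,q}` and `|V(R) ∩ {p,q}| = 1`. (2) For every nonempty
`X ⊆ V(P₁) \ {p,r}` there are `a ∈ {1,2}` and an `(a,b)`-alternating path `R` in `G`
with `t_a(R) ∈ X`, `s_1(R) ∈ {p,q}`, `|V(R) ∩ {p,q}| = 1` and `|V(R) ∩ X| = 1`. -/
theorem stmt_9 {V : Type*} [Fintype V] (D : V → V → Prop) (hloop : ∀ v, ¬ D v v)
    (b : ℕ) (hb : 1 ≤ b) (G : ExtIIGadget D b) :
    (∀ x, x ∈ G.verts → x ≠ G.p → x ≠ G.q →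
      ∃ (a : ℕ) (ha : 0 < a), a ≤ 2 ∧
        ∃ R : AltPath G.arcs a b,
          R.t ⟨a - 1, by omega⟩ = x ∧
          (R.s ⟨0, ha⟩ = G.p ∨ R.s ⟨0, ha⟩ = G.q) ∧
          (∀ z ∈ R.verts, z = G.p ∨ z = G.q → z = R.s ⟨0, ha⟩)) ∧
    (∀ X : Set V, X.Nonempty → (∀ x ∈ X, x ∈ G.P₁ ∧ x ≠ G.p ∧ x ≠ G.r) →
      ∃ (a : ℕ) (ha : 0 < a), a ≤ 2 ∧
        ∃ R : AltPath G.arcs a b,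
          R.t ⟨a - 1, by omega⟩ ∈ X ∧
          (R.s ⟨0, ha⟩ = G.p ∨ R.s ⟨0, ha⟩ = G.q) ∧
          (∀ z ∈ R.verts, z = G.p ∨ z = G.q → z = R.s ⟨0, ha⟩) ∧
          (∀ z ∈ R.verts, z ∈ X → z = R.t ⟨a - 1, by omega⟩)) := by
  classical
  have hN : b + 1 ≤ G.P₁.length := G.lenP1 hb
  have hM : b + 1 ≤ G.P₂.length := G.lenP2
  have hnd1 : G.P₁.Nodup := G.path₁.2.1
  have hnd2 : G.P₂.Nodup := G.path₂.2.1
  have hne_p : ∀ {t : ℕ} {z : V}, t + 2 ≤ G.P₁.length → G.P₁[t]? = some z →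
      z ≠ G.p := by
    intro t z htN hz hzp
    rw [hzp] at hz
    have := getElem?_inj hnd1 hz G.p_getElem?
    omega
  have hne_q1 : ∀ {t : ℕ} {z : V}, G.P₁[t]? = some z → z ≠ G.q := by
    intro t z hz hzq
    exact G.hq (hzq ▸ mem_of_getElem? hz)
  have hpP2 : G.p ∉ G.P₂ := G.p_not_mem_P2 hb
  -- index of w in case B
  constructor
  · -- Part (1)
    intro x hxv hxp hxq
    have hxv' : x = G.q ∨ x ∈ G.P₁ ∨ x ∈ G.P₂ := by
      simpa [ExtIIGadget.verts, Set.mem_insert_iff, Set.mem_union] using hxv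
    rcases hxv' with rfl | hmem
    · exact absurd rfl hxq
    by_cases hxP1 : x ∈ G.P₁
    · -- x on P₁
      obtain ⟨i, hiN, hxi⟩ := List.mem_iff_getElem.mp hxP1
      have hxi? : G.P₁[i]? = some x := by rw [List.getElem?_eq_getElem hiN, hxi]
      have hiN2 : i + 2 ≤ G.P₁.length := by
        rcases Nat.lt_or_ge (i+2) (G.P₁.length + 1) with h | h
        · omega
        · exfalso
          apply hxp
          have hp := G.p_getElem?
          rw [show G.P₁.length - 1 = i by omega] at hp
          rw [hp] at hxi?
          exact (Option.some.inj hxi?).symm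
      rcases Nat.eq_zero_or_pos i with rfl | hi1
      · -- x = r
        have hxr : G.r = x := by
          have h := G.r_getElem?
          rw [h] at hxi?
          exact Option.some.inj hxi?
        obtain ⟨R, ht, hs, hv⟩ := G.con_r hb
        refine ⟨2, by omega, by omega, R, ht.trans hxr, Or.inr hs, ?_⟩
        intro z hz hzpq
        rcases hv z hz with rfl | ⟨t, htb, ht?⟩
        · exact hs.symm
        · rcases hzpq with rfl | rfl
          · exact absurd rfl (hne_p (by omega) ht?)
          · exact absurd rfl (hne_q1 ht?)
      · -- 1 ≤ i ≤ N-2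
        rcases G.extra with ⟨z0, y1, hz0, hy1, hD⟩ | ⟨w, z0, hwP1, hwr, hz0, hD⟩
        · -- case A
          obtain ⟨R, ht, hs, hv⟩ := G.con_A hb hz0 hy1 hD hi1 hiN2 hxi?
          refine ⟨2, by omega, by omega, R, ht, Or.inr hs, ?_⟩
          intro z hz hzpq
          rcases hv z hz with rfl | hP2 | ⟨t, ht1, ht2, ht?⟩
          · exact hs.symm
          · rcases hzpq with rfl | rfl
            · exact absurd hP2 hpP2
            · exact absurd hP2 G.hq₂
          · rcases hzpq with rfl | rfl
            · exact absurd rfl (hne_p (by omega) ht?)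
            · exact absurd rfl (hne_q1 ht?)
        · -- case B
          obtain ⟨k, hkN, hwk⟩ := List.mem_iff_getElem.mp hwP1
          have hwk? : G.P₁[k]? = some w := by rw [List.getElem?_eq_getElem hkN, hwk]
          have hk1 : 1 ≤ k := by
            rcases Nat.eq_zero_or_pos k with rfl | h
            · exfalso
              have h := G.r_getElem?
              rw [h] at hwk?
              exact hwr (Option.some.inj hwk?).symm
            · exact h
          rcases Nat.lt_or_ge (k + 2) (G.P₁.length + 1) with hkN2 | hkN2
          · -- k ≤ N - 2
            have hkN2' : k + 2 ≤ G.P₁.length := by omega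
            rcases le_or_gt i k with hik | hik
            · obtain ⟨R, ht, hs, hv⟩ := G.con_B hb hk1 hkN2' hwk? hz0 hD
                hi1 hik (le_refl i) hiN2 (Or.inl rfl) hxi?
              refine ⟨2, by omega, by omega, R, ht, Or.inr hs, ?_⟩
              intro z hz hzpq
              rcases hv z hz with rfl | hP2 | ⟨t, ht1, ht2, ht?⟩
              · exact hs.symm
              · rcases hzpq with rfl | rfl
                · exact absurd hP2 hpP2
                · exact absurd hP2 G.hq₂
              · rcases hzpq with rfl | rfl
                · exact absurd rfl (hne_p (by omega) ht?)
                · exact absurd rfl (hne_q1 ht?)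
            · obtain ⟨R, ht, hs, hv⟩ := G.con_B hb hk1 hkN2' hwk? hz0 hD
                hk1 (le_refl k) (le_of_lt hik) hiN2 (Or.inr rfl) hxi?
              refine ⟨2, by omega, by omega, R, ht, Or.inr hs, ?_⟩
              intro z hz hzpq
              rcases hv z hz with rfl | hP2 | ⟨t, ht1, ht2, ht?⟩
              · exact hs.symm
              · rcases hzpq with rfl | rfl
                · exact absurd hP2 hpP2
                · exact absurd hP2 G.hq₂
              · rcases hzpq with rfl | rfl
                · exact absurd rfl (hne_p (by omega) ht?)
                · exact absurd rfl (hne_q1 ht?)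
          · -- k = N - 1, w = p
            have hwp : w = G.p := by
              have hp := G.p_getElem?
              rw [show G.P₁.length - 1 = k by omega] at hp
              rw [hp] at hwk?
              exact (Option.some.inj hwk?).symm
            subst hwp
            obtain ⟨R, ht, hs, hv⟩ := G.con_pw hb hz0 hD hi1 hiN2 hxi?
            refine ⟨1, by omega, by omega, R, ht, Or.inl hs, ?_⟩
            intro z hz hzpq
            rcases hv z hz with rfl | hP2 | ⟨t, ht1, ht2, ht?⟩
            · exact hs.symm
            · rcases hzpq with rfl | rfl
              · exact absurd hP2 hpP2
              · exact absurd hP2 G.hq₂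
            · rcases hzpq with rfl | rfl
              · exact absurd rfl (hne_p (by omega) ht?)
              · exact absurd rfl (hne_q1 ht?)
    · -- x on P₂ \ P₁
      have hxP2 : x ∈ G.P₂ := by tauto
      obtain ⟨j, hjM, hxj⟩ := List.mem_iff_getElem.mp hxP2
      have hxj? : G.P₂[j]? = some x := by rw [List.getElem?_eq_getElem hjM, hxj]
      have hjM2 : j + 2 ≤ G.P₂.length := by
        rcases Nat.lt_or_ge (j+2) (G.P₂.length + 1) with h | h
        · omega
        · exfalso
          have hr := G.r_getElem2?
          rw [show G.P₂.length - 1 = j by omega] at hr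
          rw [hr] at hxj?
          exact hxP1 ((Option.some.inj hxj?) ▸ G.r_mem)
      obtain ⟨R, ht, hs, hv⟩ := G.con_z hb hjM2 hxj?
      refine ⟨2, by omega, by omega, R, ht, Or.inr hs, ?_⟩
      intro z hz hzpq
      rcases hv z hz with rfl | hP2 | ⟨t, ht1, ht2, ht?⟩
      · exact hs.symm
      · rcases hzpq with rfl | rfl
        · exact absurd hP2 hpP2
        · exact absurd hP2 G.hq₂
      · rcases hzpq with rfl | rfl
        · exact absurd rfl (hne_p (by omega) ht?)
        · exact absurd rfl (hne_q1 ht?)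
  · -- Part (2)
    intro X hXne hX
    set T : Finset ℕ :=
      (Finset.range G.P₁.length).filter (fun i => ∃ y ∈ X, G.P₁[i]? = some y) with hT
    have hmemT : ∀ {t : ℕ}, t ∈ T ↔ t < G.P₁.length ∧ ∃ y ∈ X, G.P₁[t]? = some y := by
      intro t
      simp [hT]
    have hToT : ∀ {t : ℕ} {z : V}, G.P₁[t]? = some z → z ∈ X → t ∈ T := by
      intro t z hz hzX
      exact hmemT.mpr ⟨(List.getElem?_eq_some_iff.mp hz).1, z, hzX, hz⟩
    have hTne : T.Nonempty := by
      obtain ⟨x0, hx0⟩ := hXne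
      obtain ⟨i0, hi0N, hi0⟩ := List.mem_iff_getElem.mp (hX x0 hx0).1
      exact ⟨i0, hToT (by rw [List.getElem?_eq_getElem hi0N, hi0]) hx0⟩
    have hTbd : ∀ t ∈ T, 1 ≤ t ∧ t + 2 ≤ G.P₁.length := by
      intro t ht
      obtain ⟨htN, y, hyX, hy⟩ := hmemT.mp ht
      obtain ⟨hy1, hy2, hy3⟩ := hX y hyX
      constructor
      · rcases Nat.eq_zero_or_pos t with rfl | h
        · exfalso
          have h := G.r_getElem?
          rw [h] at hy
          exact hy3 (Option.some.inj hy).symm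
        · exact h
      · rcases Nat.lt_or_ge (t+2) (G.P₁.length + 1) with h | h
        · omega
        · exfalso
          have hp := G.p_getElem?
          rw [show G.P₁.length - 1 = t by omega] at hp
          rw [hp] at hy
          exact hy2 (Option.some.inj hy).symm
    have hXq : G.q ∉ X := fun h => G.hq (hX _ h).1
    have hXP2 : ∀ z ∈ G.P₂, z ∉ X := by
      intro z hz hzX
      exact (hX z hzX).2.2 (G.inter z (hX z hzX).1 hz)
    rcases G.extra with ⟨z0, y1, hz0, hy1, hD⟩ | ⟨w, z0, hwP1, hwr, hz0, hD⟩
    · -- case A : use minimal index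
      set i := T.min' hTne with hi
      have hiT : i ∈ T := T.min'_mem hTne
      obtain ⟨hiN, y, hyX, hy⟩ := hmemT.mp hiT
      obtain ⟨hi1, hiN2⟩ := hTbd i hiT
      obtain ⟨R, ht, hs, hv⟩ := G.con_A hb hz0 hy1 hD hi1 hiN2 hy
      refine ⟨2, by omega, by omega, R, ht.symm ▸ hyX, Or.inr hs, ?_, ?_⟩
      · intro z hz hzpq
        rcases hv z hz with rfl | hP2 | ⟨t, ht1, ht2, ht?⟩
        · exact hs.symm
        · rcases hzpq with rfl | rfl
          · exact absurd hP2 hpP2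
          · exact absurd hP2 G.hq₂
        · rcases hzpq with rfl | rfl
          · exact absurd rfl (hne_p (by omega) ht?)
          · exact absurd rfl (hne_q1 ht?)
      · intro z hz hzX
        rw [ht]
        rcases hv z hz with rfl | hP2 | ⟨t, ht1, ht2, ht?⟩
        · exact absurd hzX hXq
        · exact absurd hzX (hXP2 z hP2)
        · have htT : t ∈ T := hToT ht? hzX
          have : i ≤ t := T.min'_le t htT
          have htieq : t = i := by omega
          subst htieq
          rw [ht?] at hy
          exact Option.some.inj hy.symm |>.symm
    · -- case B
      obtain ⟨k, hkN, hwk⟩ := List.mem_iff_getElem.mp hwP1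
      have hwk? : G.P₁[k]? = some w := by rw [List.getElem?_eq_getElem hkN, hwk]
      have hk1 : 1 ≤ k := by
        rcases Nat.eq_zero_or_pos k with rfl | h
        · exfalso
          have h := G.r_getElem?
          rw [h] at hwk?
          exact hwr (Option.some.inj hwk?).symm
        · exact h
      rcases Nat.lt_or_ge (k + 2) (G.P₁.length + 1) with hkN2 | hkN2
      · -- k ≤ N - 2
        have hkN2' : k + 2 ≤ G.P₁.length := by omega
        set Tk : Finset ℕ := T.filter (fun t => t ≤ k) with hTk
        by_cases hTkne : Tk.Nonempty
        · -- some element of X at index ≤ k : take max such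
          set c := Tk.max' hTkne with hc
          have hcTk : c ∈ Tk := Tk.max'_mem hTkne
          have hcT : c ∈ T := (Finset.mem_filter.mp hcTk).1
          have hck : c ≤ k := (Finset.mem_filter.mp hcTk).2
          obtain ⟨hcN, y, hyX, hy⟩ := hmemT.mp hcT
          obtain ⟨hc1, hcN2⟩ := hTbd c hcT
          obtain ⟨R, ht, hs, hv⟩ := G.con_B hb hk1 hkN2' hwk? hz0 hD
            hc1 hck (le_refl c) hcN2 (Or.inl rfl) hy
          refine ⟨2, by omega, by omega, R, ht.symm ▸ hyX, Or.inr hs, ?_, ?_⟩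
          · intro z hz hzpq
            rcases hv z hz with rfl | hP2 | ⟨t, ht1, ht2, ht?⟩
            · exact hs.symm
            · rcases hzpq with rfl | rfl
              · exact absurd hP2 hpP2
              · exact absurd hP2 G.hq₂
            · rcases hzpq with rfl | rfl
              · exact absurd rfl (hne_p (by omega) ht?)
              · exact absurd rfl (hne_q1 ht?)
          · intro z hz hzX
            rw [ht]
            rcases hv z hz with rfl | hP2 | ⟨t, ht1, ht2, ht?⟩
            · exact absurd hzX hXq
            · exact absurd hzX (hXP2 z hP2)
            · have htT : t ∈ T := hToT ht? hzX
              have htk : t ≤ k := by omega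
              have : t ≤ c := Tk.le_max' t (Finset.mem_filter.mpr ⟨htT, htk⟩)
              have htceq : t = c := by omega
              subst htceq
              rw [ht?] at hy
              exact Option.some.inj hy.symm |>.symm
        · -- all elements of X have index > k : take min index
          set d := T.min' hTne with hd
          have hdT : d ∈ T := T.min'_mem hTne
          obtain ⟨hdN, y, hyX, hy⟩ := hmemT.mp hdT
          obtain ⟨hd1, hdN2⟩ := hTbd d hdT
          have hkd : k < d := by
            rcases Nat.lt_or_ge k d with h | h
            · exact h
            · exact absurd ⟨d, Finset.mem_filter.mpr ⟨hdT, h⟩⟩ hTkne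
          obtain ⟨R, ht, hs, hv⟩ := G.con_B hb hk1 hkN2' hwk? hz0 hD
            hk1 (le_refl k) (le_of_lt hkd) hdN2 (Or.inr rfl) hy
          refine ⟨2, by omega, by omega, R, ht.symm ▸ hyX, Or.inr hs, ?_, ?_⟩
          · intro z hz hzpq
            rcases hv z hz with rfl | hP2 | ⟨t, ht1, ht2, ht?⟩
            · exact hs.symm
            · rcases hzpq with rfl | rfl
              · exact absurd hP2 hpP2
              · exact absurd hP2 G.hq₂
            · rcases hzpq with rfl | rfl
              · exact absurd rfl (hne_p (by omega) ht?)
              · exact absurd rfl (hne_q1 ht?)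
          · intro z hz hzX
            rw [ht]
            rcases hv z hz with rfl | hP2 | ⟨t, ht1, ht2, ht?⟩
            · exact absurd hzX hXq
            · exact absurd hzX (hXP2 z hP2)
            · have htT : t ∈ T := hToT ht? hzX
              have htd : t ≥ d := T.min'_le t htT
              have htk : ¬ (t ≤ k) := by
                intro h
                exact hTkne ⟨t, Finset.mem_filter.mpr ⟨htT, h⟩⟩
              have htdeq : t = d := by omega
              subst htdeq
              rw [ht?] at hy
              exact Option.some.inj hy.symm |>.symm
      · -- k = N - 1, w = p : use minimal index and the path from p
        have hwp : w = G.p := by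
          have hp := G.p_getElem?
          rw [show G.P₁.length - 1 = k by omega] at hp
          rw [hp] at hwk?
          exact (Option.some.inj hwk?).symm
        subst hwp
        set i := T.min' hTne with hi
        have hiT : i ∈ T := T.min'_mem hTne
        obtain ⟨hiN, y, hyX, hy⟩ := hmemT.mp hiT
        obtain ⟨hi1, hiN2⟩ := hTbd i hiT
        obtain ⟨R, ht, hs, hv⟩ := G.con_pw hb hz0 hD hi1 hiN2 hy
        refine ⟨1, by omega, by omega, R, ht.symm ▸ hyX, Or.inl hs, ?_, ?_⟩
        · intro z hz hzpq
          rcases hv z hz with rfl | hP2 | ⟨t, ht1, ht2, ht?⟩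
          · exact hs.symm
          · rcases hzpq with rfl | rfl
            · exact absurd hP2 hpP2
            · exact absurd hP2 G.hq₂
          · rcases hzpq with rfl | rfl
            · exact absurd rfl (hne_p (by omega) ht?)
            · exact absurd rfl (hne_q1 ht?)
        · intro z hz hzX
          rw [ht]
          rcases hv z hz with rfl | hP2 | ⟨t, ht1, ht2, ht?⟩
          · exact absurd rfl (hX _ hzX).2.1
          · exact absurd hzX (hXP2 z hP2)
          · have htT : t ∈ T := hToT ht? hzX
            have : i ≤ t := T.min'_le t htT
            have htieq : t = i := by omega
            subst htieq
            rw [ht?] at hy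
            exact Option.some.inj hy.symm |>.symm


end Paper
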